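/- For a commutative finite-dimensional Von Neumann algebra Z on a finite-dimensional complex Hilbert space H, there exists a unique family {π_i} of non-zero self-adjoint pairwise orthogonal projectors (π_i π_j = δ_ij π_i) such that Z equals the linear span of {π_i}. -/

import Mathlib

open Matrix Polynomial

variable {n : Type} [Fintype n] [DecidableEq n]

/-- Conjugation by a unitary matrix, as an algebra homomorphism. -/
noncomputable def conjAH (U : Matrix n n ℂ) (h1 : U * star U = 1) (h2 : star U * U = 1) :
    Matrix n n ℂ →ₐ[ℂ] Matrix n n ℂ where
  toFun A := U * A * star U
  map_one' := by show U * 1 * star U = 1; rw [mul_one, h1]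
  map_mul' A B := by
    simp only [mul_assoc]
    rw [← mul_assoc (star U) U (B * star U), h2, one_mul]
  map_zero' := by simp
  map_add' A B := by simp [mul_add, add_mul]
  commutes' c := by
    simp only [Algebra.algebraMap_eq_smul_one, mul_smul_comm, smul_mul_assoc, mul_one, h1]

lemma aeval_conj (U A : Matrix n n ℂ) (h1 : U * star U = 1) (h2 : star U * U = 1)
    (p : ℂ[X]) : aeval (U * A * star U) p = U * aeval A p * star U :=
  aeval_algHom_apply (conjAH U h1 h2) A p

lemma aeval_diag (d : n → ℂ) (p : ℂ[X]) :
    aeval (diagonal d) p = diagonal (fun i => p.eval (d i)) := by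
  have h := aeval_algHom_apply (diagonalAlgHom (n := n) (α := ℂ) ℂ) d p
  simp only [diagonalAlgHom_apply] at h
  rw [h]
  have he : (aeval d p : n → ℂ) = fun i => p.eval (d i) := by
    funext i
    have h2 := aeval_algHom_apply (Pi.evalAlgHom ℂ (fun _ : n => ℂ) i) d p
    simpa using h2.symm
  rw [he]

lemma exists_spectral_proj (e b : Matrix n n ℂ) (hee : e * e = e)
    (hb : bᴴ = b) (hbe : b * e = b) (heb : e * b = b)
    (hnot : ∀ c : ℂ, b ≠ c • e) :
    ∃ f : Matrix n n ℂ, (∃ q : ℂ[X], f = aeval b q) ∧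
      fᴴ = f ∧ f * f = f ∧ f ≠ 0 ∧ f ≠ e ∧ f * e = f ∧ e * f = f := by
  have hherm : b.IsHermitian := hb
  set U : Matrix n n ℂ := ↑(hherm.eigenvectorUnitary) with hUdef
  have hU1 : U * star U = 1 := Matrix.mem_unitaryGroup_iff.mp hherm.eigenvectorUnitary.2
  have hU2 : star U * U = 1 := Matrix.mem_unitaryGroup_iff'.mp hherm.eigenvectorUnitary.2
  set μ : n → ℝ := hherm.eigenvalues with hμ
  have hspec : b = U * diagonal (RCLike.ofReal ∘ μ) * star U := hherm.spectral_theorem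
  have hb0 : b ≠ 0 := fun h => hnot 0 (by simpa using h)
  have hex : ∃ i0 : n, μ i0 ≠ 0 := by
    by_contra h
    push_neg at h
    apply hb0
    have hz : (RCLike.ofReal ∘ μ : n → ℂ) = 0 := funext fun i => by simp [h i]
    rw [hspec, hz]
    have hz0 : diagonal (0 : n → ℂ) = 0 := diagonal_zero
    rw [hz0, Matrix.mul_zero, Matrix.zero_mul]
  obtain ⟨i0, hi0⟩ := hex
  set lam : ℂ := (RCLike.ofReal (μ i0) : ℂ) with hlam
  have hlam0 : lam ≠ 0 := by simpa [hlam] using hi0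
  set s : Finset ℂ := insert 0 (Finset.image (fun i => (RCLike.ofReal (μ i) : ℂ)) Finset.univ)
    with hs
  have hlam_mem : lam ∈ s :=
    Finset.mem_insert_of_mem (Finset.mem_image.mpr ⟨i0, Finset.mem_univ _, rfl⟩)
  set q : ℂ[X] := Lagrange.basis s id lam with hq
  set d : n → ℂ := fun i => if (RCLike.ofReal (μ i) : ℂ) = lam then 1 else 0 with hd
  have hdpos : ∀ i, (RCLike.ofReal (μ i) : ℂ) = lam → d i = 1 := fun i hc => if_pos hc
  have hdneg : ∀ i, (RCLike.ofReal (μ i) : ℂ) ≠ lam → d i = 0 := fun i hc => if_neg hc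
  have hq_eval : ∀ i, q.eval (RCLike.ofReal (μ i) : ℂ) = d i := by
    intro i
    by_cases hc : (RCLike.ofReal (μ i) : ℂ) = lam
    · rw [hc, hdpos i hc]
      have h1 := Lagrange.eval_basis_self (v := (id : ℂ → ℂ)) (Set.injOn_id _) hlam_mem
      exact h1
    · rw [hdneg i hc]
      have hmem : (RCLike.ofReal (μ i) : ℂ) ∈ s :=
        Finset.mem_insert_of_mem (Finset.mem_image.mpr ⟨i, Finset.mem_univ _, rfl⟩)
      have h1 := Lagrange.eval_basis_of_ne (v := (id : ℂ → ℂ)) (i := lam)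
        (j := (RCLike.ofReal (μ i) : ℂ)) (fun h => hc h.symm) hmem
      simpa using h1
  have hq0 : q.eval 0 = 0 := by
    have h1 := Lagrange.eval_basis_of_ne (s := s) (v := (id : ℂ → ℂ)) (i := lam) (j := (0 : ℂ))
      hlam0 (Finset.mem_insert_self 0 _)
    simpa using h1
  refine ⟨aeval b q, ⟨q, rfl⟩, ?_⟩
  have hform : aeval b q = U * diagonal d * star U := by
    rw [hspec, aeval_conj U _ hU1 hU2, aeval_diag]
    have hfun : (fun i => q.eval ((RCLike.ofReal ∘ μ) i)) = d := funext fun i => hq_eval i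
    rw [hfun]
  have hconj : ∀ A B : Matrix n n ℂ, (U * A * star U) * (U * B * star U) = U * (A * B) * star U :=
    fun A B => (_root_.map_mul (conjAH U hU1 hU2) A B).symm
  have hd01 : ∀ i, d i = 0 ∨ d i = 1 := by
    intro i
    by_cases hc : (RCLike.ofReal (μ i) : ℂ) = lam
    · exact Or.inr (hdpos i hc)
    · exact Or.inl (hdneg i hc)
  have hdd : diagonal d * diagonal d = diagonal d := by
    rw [diagonal_mul_diagonal]
    have : (fun i => d i * d i) = d := by
      funext i
      rcases hd01 i with h | h <;> rw [h] <;> ring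
    rw [this]
  have hdstar : (diagonal d)ᴴ = diagonal d := by
    rw [diagonal_conjTranspose]
    have : (star d) = d := by
      funext i
      rcases hd01 i with h | h <;> simp [Pi.star_apply, h]
    rw [this]
  have hfherm : (aeval b q)ᴴ = aeval b q := by
    rw [hform]
    calc (U * diagonal d * star U)ᴴ = U * (diagonal d)ᴴ * star U := by
          simp [conjTranspose_mul, Matrix.star_eq_conjTranspose, Matrix.mul_assoc]
      _ = U * diagonal d * star U := by rw [hdstar]
  have hfidem : aeval b q * aeval b q = aeval b q := by
    rw [hform, hconj, hdd]
  have hextract : star U * (U * diagonal d * star U) * U = diagonal d := by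
    simp only [← Matrix.mul_assoc]
    rw [hU2, Matrix.one_mul, Matrix.mul_assoc, hU2, Matrix.mul_one]
  have hf0 : aeval b q ≠ 0 := by
    intro h
    have h2 := hextract
    rw [← hform, h, Matrix.mul_zero, Matrix.zero_mul] at h2
    have h3 := congrArg (fun M : Matrix n n ℂ => M i0 i0) h2
    simp only [Matrix.zero_apply, diagonal_apply_eq] at h3
    rw [hdpos i0 hlam.symm] at h3
    exact zero_ne_one h3
  have hbf : b * aeval b q = lam • aeval b q := by
    rw [hform]
    conv_lhs => rw [hspec]
    rw [hconj, diagonal_mul_diagonal]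
    have hentry : (fun i => (RCLike.ofReal ∘ μ) i * d i) = lam • d := by
      funext i
      by_cases hc : (RCLike.ofReal (μ i) : ℂ) = lam
      · simp only [Function.comp_apply, Pi.smul_apply, smul_eq_mul, hc]
      · simp only [Function.comp_apply, Pi.smul_apply, smul_eq_mul, hdneg i hc, mul_zero]
    rw [hentry, diagonal_smul, Matrix.mul_smul, Matrix.smul_mul]
  have hcomm_e : Commute e (aeval b q) := by
    refine Algebra.commute_of_mem_adjoin_singleton_of_commute
      (Polynomial.aeval_mem_adjoin_singleton ℂ b) ?_
    show e * b = b * e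
    rw [heb, hbe]
  have hfe : aeval b q * e = aeval b q := by
    have hq00 : q.coeff 0 = 0 := by rw [Polynomial.coeff_zero_eq_eval_zero]; exact hq0
    obtain ⟨r, hr⟩ := Polynomial.X_dvd_iff.mpr hq00
    have hrcomm : Commute e (aeval b r) :=
      Algebra.commute_of_mem_adjoin_singleton_of_commute
        (Polynomial.aeval_mem_adjoin_singleton ℂ b) (by show e * b = b * e; rw [heb, hbe])
    rw [hr, _root_.map_mul, aeval_X, Matrix.mul_assoc, ← hrcomm.eq, ← Matrix.mul_assoc, hbe]
  have hef : e * aeval b q = aeval b q := by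
    rw [hcomm_e.eq, hfe]
  have hfne : aeval b q ≠ e := by
    intro h
    apply hnot lam
    calc b = b * e := hbe.symm
      _ = b * aeval b q := by rw [h]
      _ = lam • aeval b q := hbf
      _ = lam • e := by rw [h]
  exact ⟨hfherm, hfidem, hf0, hfne, hfe, hef⟩

lemma mem_M {Z : StarSubalgebra ℂ (Matrix n n ℂ)} {e x : Matrix n n ℂ} :
    x ∈ Submodule.map (LinearMap.mulLeft ℂ e) (Subalgebra.toSubmodule Z.toSubalgebra) ↔
      ∃ a ∈ Z, e * a = x := by
  simp [Submodule.mem_map, LinearMap.mulLeft_apply, Subalgebra.mem_toSubmodule,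
    StarSubalgebra.mem_toSubalgebra]

lemma exists_partition (Z : StarSubalgebra ℂ (Matrix n n ℂ))
    (hcomm : ∀ a ∈ Z, ∀ b ∈ Z, a * b = b * a) :
    ∀ d : ℕ, ∀ e : Matrix n n ℂ, e ∈ Z → eᴴ = e → e * e = e →
      Module.finrank ℂ (Submodule.map (LinearMap.mulLeft ℂ e)
        (Subalgebra.toSubmodule Z.toSubalgebra)) ≤ d →
      ∃ P : Finset (Matrix n n ℂ),
        (∀ p ∈ P, p ≠ 0) ∧ (∀ p ∈ P, pᴴ = p) ∧ (∀ p ∈ P, p * p = p) ∧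
        (∀ p ∈ P, ∀ r ∈ P, p ≠ r → p * r = 0) ∧
        Submodule.span ℂ (P : Set (Matrix n n ℂ)) =
          Submodule.map (LinearMap.mulLeft ℂ e) (Subalgebra.toSubmodule Z.toSubalgebra) := by
  intro d
  induction d with
  | zero =>
    intro e heZ heh hee hrank
    refine ⟨∅, by simp, by simp, by simp, by simp, ?_⟩
    rw [Finset.coe_empty, Submodule.span_empty]
    exact (Submodule.finrank_eq_zero.mp (Nat.le_zero.mp hrank)).symm
  | succ d ih =>
    intro e heZ heh hee hrank
    by_cases he0 : e = 0
    · refine ⟨∅, by simp, by simp, by simp, by simp, ?_⟩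
      rw [Finset.coe_empty, Submodule.span_empty]
      symm
      rw [Submodule.eq_bot_iff]
      intro x hx
      obtain ⟨a, _, rfl⟩ := mem_M.mp hx
      rw [he0, Matrix.zero_mul]
    by_cases hscal : ∀ a ∈ Z, ∃ c : ℂ, e * a = c • e
    · refine ⟨{e}, ?_, ?_, ?_, ?_, ?_⟩
      · intro p hp; rw [Finset.mem_singleton] at hp; subst hp; exact he0
      · intro p hp; rw [Finset.mem_singleton] at hp; subst hp; exact heh
      · intro p hp; rw [Finset.mem_singleton] at hp; subst hp; exact hee
      · intro p hp r hr hne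
        rw [Finset.mem_singleton] at hp hr
        exact absurd (hp.trans hr.symm) hne
      · apply le_antisymm
        · rw [Finset.coe_singleton, Submodule.span_singleton_le_iff_mem]
          exact mem_M.mpr ⟨1, one_mem Z, mul_one e⟩
        · intro x hx
          obtain ⟨a, haZ, rfl⟩ := mem_M.mp hx
          obtain ⟨c, hc⟩ := hscal a haZ
          rw [hc, Finset.coe_singleton]
          exact Submodule.smul_mem _ c (Submodule.mem_span_singleton_self e)
    · push_neg at hscal
      obtain ⟨a, haZ, ha⟩ := hscal
      -- build a hermitian non-scalar element b
      have haZ' : aᴴ ∈ Z := by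
        have hs := star_mem haZ
        rwa [Matrix.star_eq_conjTranspose] at hs
      have hcom_ae : a * e = e * a := hcomm a haZ e heZ
      have hcom_ahe : aᴴ * e = e * aᴴ := hcomm aᴴ haZ' e heZ
      have huh : (e * a)ᴴ = e * aᴴ := by rw [conjTranspose_mul, heh, hcom_ahe]
      have hvh : (e * aᴴ)ᴴ = e * a := by
        rw [conjTranspose_mul, heh, conjTranspose_conjTranspose, hcom_ae]
      have huZ : e * a ∈ Z := mul_mem heZ haZ
      have hvZ : e * aᴴ ∈ Z := mul_mem heZ haZ'
      have hue : (e * a) * e = e * a := by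
        rw [Matrix.mul_assoc, hcom_ae, ← Matrix.mul_assoc, hee]
      have heu : e * (e * a) = e * a := by rw [← Matrix.mul_assoc, hee]
      have hve : (e * aᴴ) * e = e * aᴴ := by
        rw [Matrix.mul_assoc, hcom_ahe, ← Matrix.mul_assoc, hee]
      have hev : e * (e * aᴴ) = e * aᴴ := by rw [← Matrix.mul_assoc, hee]
      have hbex : ∃ b, b ∈ Z ∧ bᴴ = b ∧ b * e = b ∧ e * b = b ∧ ∀ c : ℂ, b ≠ c • e := by
        by_cases hx : ∀ c : ℂ, e * a + e * aᴴ ≠ c • e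
        · refine ⟨e * a + e * aᴴ, add_mem huZ hvZ, ?_, ?_, ?_, hx⟩
          · rw [conjTranspose_add, huh, hvh, add_comm]
          · rw [add_mul, hue, hve]
          · rw [mul_add, heu, hev]
        by_cases hy : ∀ c : ℂ, Complex.I • (e * aᴴ - e * a) ≠ c • e
        · refine ⟨Complex.I • (e * aᴴ - e * a),
            SMulMemClass.smul_mem _ (sub_mem hvZ huZ), ?_, ?_, ?_, hy⟩
          · rw [conjTranspose_smul, conjTranspose_sub, huh, hvh]
            rw [show star Complex.I = -Complex.I from Complex.conj_I]
            rw [neg_smul, ← smul_neg, neg_sub]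
          · rw [smul_mul_assoc, sub_mul, hue, hve]
          · rw [mul_smul_comm, mul_sub, heu, hev]
        · exfalso
          push_neg at hx hy
          obtain ⟨c1, hc1⟩ := hx
          obtain ⟨c2, hc2⟩ := hy
          apply ha ((c1 + Complex.I * c2) / 2)
          have h2 : e * a + e * a =
              (e * a + e * aᴴ) + Complex.I • (Complex.I • (e * aᴴ - e * a)) := by
            rw [smul_smul, Complex.I_mul_I, neg_smul, one_smul]
            abel
          rw [hc1, hc2, smul_smul] at h2
          have h3 : (2 : ℂ) • (e * a) = (c1 + Complex.I * c2) • e := by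
            rw [two_smul, h2, ← add_smul]
          calc e * a = (2⁻¹ : ℂ) • ((2 : ℂ) • (e * a)) := by
                rw [smul_smul]; norm_num
            _ = (2⁻¹ : ℂ) • ((c1 + Complex.I * c2) • e) := by rw [h3]
            _ = ((c1 + Complex.I * c2) / 2) • e := by rw [smul_smul]; congr 1; ring
      obtain ⟨b, hbZ, hbh, hbe, heb, hbnot⟩ := hbex
      obtain ⟨f, ⟨qpoly, hfp⟩, hfh, hff, hf0, hfne, hfe, hef⟩ :=
        exists_spectral_proj e b hee hbh hbe heb hbnot
      have hfZ : f ∈ Z := by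
        have hbZ' : b ∈ Z.toSubalgebra := StarSubalgebra.mem_toSubalgebra.mpr hbZ
        rw [← StarSubalgebra.mem_toSubalgebra, hfp]
        have h5 := Polynomial.aeval_algHom_apply Z.toSubalgebra.val
          (⟨b, hbZ'⟩ : Z.toSubalgebra) qpoly
        rw [show (Z.toSubalgebra.val (⟨b, hbZ'⟩ : Z.toSubalgebra)) = b from rfl] at h5
        rw [h5]
        exact SetLike.coe_mem _
      set g : Matrix n n ℂ := e - f with hg
      have hgZ : g ∈ Z := sub_mem heZ hfZ
      have hgh : gᴴ = g := by rw [hg, conjTranspose_sub, heh, hfh]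
      have hgg : g * g = g := by
        rw [hg, sub_mul, mul_sub, mul_sub, hee, hef, hfe, hff, sub_self, sub_zero]
      have hg0 : g ≠ 0 := by
        intro h
        apply hfne
        rw [hg, sub_eq_zero] at h
        exact h.symm
      have hfg : f * g = 0 := by rw [hg, mul_sub, hfe, hff, sub_self]
      have hgf : g * f = 0 := by rw [hg, sub_mul, hef, hff, sub_self]
      have heg : e * g = g := by rw [hg, mul_sub, hee, hef]
      have hge : g * e = g := by rw [hg, sub_mul, hee, hfe]
      set S := Subalgebra.toSubmodule Z.toSubalgebra
      set Me := Submodule.map (LinearMap.mulLeft ℂ e) S with hMe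
      set Mf := Submodule.map (LinearMap.mulLeft ℂ f) S with hMf
      set Mg := Submodule.map (LinearMap.mulLeft ℂ g) S with hMg
      have h_sup : Me = Mf ⊔ Mg := by
        apply le_antisymm
        · intro x hx
          obtain ⟨a2, ha2, rfl⟩ := mem_M.mp hx
          have hsplit : e * a2 = f * a2 + g * a2 := by
            rw [← add_mul, hg, add_sub_cancel]
          rw [hsplit]
          exact Submodule.add_mem_sup (mem_M.mpr ⟨a2, ha2, rfl⟩) (mem_M.mpr ⟨a2, ha2, rfl⟩)
        · apply sup_le
          · intro x hx
            obtain ⟨a2, ha2, rfl⟩ := mem_M.mp hx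
            exact mem_M.mpr ⟨f * a2, mul_mem hfZ ha2, by rw [← Matrix.mul_assoc, hef]⟩
          · intro x hx
            obtain ⟨a2, ha2, rfl⟩ := mem_M.mp hx
            exact mem_M.mpr ⟨g * a2, mul_mem hgZ ha2, by rw [← Matrix.mul_assoc, heg]⟩
      have h_disj : Mf ⊓ Mg = ⊥ := by
        rw [Submodule.eq_bot_iff]
        intro x hx
        obtain ⟨a2, ha2, hx2⟩ := mem_M.mp hx.1
        obtain ⟨a3, ha3, hx3⟩ := mem_M.mp hx.2
        have e1 : f * x = x := by
          rw [← hx2, ← Matrix.mul_assoc, hff]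
        have e2 : f * x = 0 := by
          rw [← hx3, ← Matrix.mul_assoc, hfg, Matrix.zero_mul]
        rw [← e1, e2]
      have h_rank : Module.finrank ℂ Me = Module.finrank ℂ Mf + Module.finrank ℂ Mg := by
        have hh := Submodule.finrank_sup_add_finrank_inf_eq Mf Mg
        rw [h_disj, finrank_bot, add_zero] at hh
        rw [h_sup, hh]
      have hfpos : 0 < Module.finrank ℂ Mf := by
        rcases Nat.eq_zero_or_pos (Module.finrank ℂ Mf) with h | h
        · exfalso
          apply hf0
          have : Mf = ⊥ := Submodule.finrank_eq_zero.mp h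
          have hfm : f ∈ Mf := mem_M.mpr ⟨1, one_mem Z, mul_one f⟩
          rw [this] at hfm
          exact hfm
        · exact h
      have hgpos : 0 < Module.finrank ℂ Mg := by
        rcases Nat.eq_zero_or_pos (Module.finrank ℂ Mg) with h | h
        · exfalso
          apply hg0
          have : Mg = ⊥ := Submodule.finrank_eq_zero.mp h
          have hgm : g ∈ Mg := mem_M.mpr ⟨1, one_mem Z, mul_one g⟩
          rw [this] at hgm
          exact hgm
        · exact h
      obtain ⟨P₁, h10, h1h, h1i, h1o, h1s⟩ := ih f hfZ hfh hff
        (show Module.finrank ℂ Mf ≤ d by omega)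
      obtain ⟨P₂, h20, h2h, h2i, h2o, h2s⟩ := ih g hgZ hgh hgg
        (show Module.finrank ℂ Mg ≤ d by omega)
      have hcross : ∀ p, p ∈ Submodule.span ℂ (P₁ : Set (Matrix n n ℂ)) →
          ∀ r, r ∈ Submodule.span ℂ (P₂ : Set (Matrix n n ℂ)) → p * r = 0 := by
        intro p hp r hr
        rw [h1s] at hp
        rw [h2s] at hr
        obtain ⟨a2, ha2, rfl⟩ := mem_M.mp hp
        obtain ⟨a3, ha3, rfl⟩ := mem_M.mp hr
        calc f * a2 * (g * a3) = f * (a2 * (g * a3)) := by rw [Matrix.mul_assoc]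
          _ = f * (a2 * g * a3) := by rw [Matrix.mul_assoc a2 g a3]
          _ = f * (g * a2 * a3) := by rw [hcomm a2 ha2 g hgZ]
          _ = f * g * (a2 * a3) := by rw [Matrix.mul_assoc g a2 a3, ← Matrix.mul_assoc f g _]
          _ = 0 := by rw [hfg, Matrix.zero_mul]
      have hcross' : ∀ p, p ∈ Submodule.span ℂ (P₂ : Set (Matrix n n ℂ)) →
          ∀ r, r ∈ Submodule.span ℂ (P₁ : Set (Matrix n n ℂ)) → p * r = 0 := by
        intro p hp r hr
        rw [h2s] at hp
        rw [h1s] at hr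
        obtain ⟨a2, ha2, rfl⟩ := mem_M.mp hp
        obtain ⟨a3, ha3, rfl⟩ := mem_M.mp hr
        calc g * a2 * (f * a3) = g * (a2 * (f * a3)) := by rw [Matrix.mul_assoc]
          _ = g * (a2 * f * a3) := by rw [Matrix.mul_assoc a2 f a3]
          _ = g * (f * a2 * a3) := by rw [hcomm a2 ha2 f hfZ]
          _ = g * f * (a2 * a3) := by rw [Matrix.mul_assoc f a2 a3, ← Matrix.mul_assoc g f _]
          _ = 0 := by rw [hgf, Matrix.zero_mul]
      refine ⟨P₁ ∪ P₂, ?_, ?_, ?_, ?_, ?_⟩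
      · intro p hp
        rcases Finset.mem_union.mp hp with h | h
        exacts [h10 p h, h20 p h]
      · intro p hp
        rcases Finset.mem_union.mp hp with h | h
        exacts [h1h p h, h2h p h]
      · intro p hp
        rcases Finset.mem_union.mp hp with h | h
        exacts [h1i p h, h2i p h]
      · intro p hp r hr hne
        rcases Finset.mem_union.mp hp with h | h <;>
          rcases Finset.mem_union.mp hr with h' | h'
        · exact h1o p h r h' hne
        · exact hcross p (Submodule.subset_span h) r (Submodule.subset_span h')
        · exact hcross' p (Submodule.subset_span h) r (Submodule.subset_span h')
        · exact h2o p h r h' hne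
      · rw [Finset.coe_union, Submodule.span_union, h1s, h2s, ← h_sup]

lemma coeff01 (P : Finset (Matrix n n ℂ))
    (hP0 : ∀ p ∈ P, p ≠ 0) (hPi : ∀ p ∈ P, p * p = p)
    (hPo : ∀ p ∈ P, ∀ r ∈ P, p ≠ r → p * r = 0)
    (x : Matrix n n ℂ) (hx : x ∈ Submodule.span ℂ (P : Set (Matrix n n ℂ)))
    (hxx : x * x = x) :
    ∃ c : Matrix n n ℂ → ℂ, (∑ p ∈ P, c p • p = x) ∧
      ∀ p ∈ P, x * p = c p • p ∧ (c p = 0 ∨ c p = 1) := by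
  obtain ⟨c, -, hc⟩ := Submodule.mem_span_finset.mp hx
  refine ⟨c, hc, fun p hp => ?_⟩
  have hxp : x * p = c p • p := by
    rw [← hc, Finset.sum_mul, Finset.sum_eq_single p]
    · rw [smul_mul_assoc, hPi p hp]
    · intro r hr hne
      rw [smul_mul_assoc, hPo r hr p hp hne, smul_zero]
    · intro h
      exact absurd hp h
  refine ⟨hxp, ?_⟩
  have e1 : x * (x * p) = x * p := by rw [← Matrix.mul_assoc, hxx]
  rw [hxp, mul_smul_comm, hxp, smul_smul] at e1
  have e2 : (c p * c p - c p) • p = 0 := by rw [sub_smul, e1, sub_self]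
  rcases smul_eq_zero.mp e2 with h | h
  · have h3 : c p * (c p - 1) = 0 := by linear_combination h
    rcases mul_eq_zero.mp h3 with h4 | h4
    · exact Or.inl h4
    · exact Or.inr (by linear_combination h4)
  · exact absurd h (hP0 p hp)

lemma unique_subset (Z : StarSubalgebra ℂ (Matrix n n ℂ))
    (hcomm : ∀ a ∈ Z, ∀ b ∈ Z, a * b = b * a)
    (A B : Finset (Matrix n n ℂ))
    (hA0 : ∀ p ∈ A, p ≠ 0) (hAi : ∀ p ∈ A, p * p = p)
    (hAo : ∀ p ∈ A, ∀ r ∈ A, p ≠ r → p * r = 0)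
    (hAs : (Z : Set (Matrix n n ℂ)) = (Submodule.span ℂ (A : Set (Matrix n n ℂ)) :
      Set (Matrix n n ℂ)))
    (hB0 : ∀ p ∈ B, p ≠ 0) (hBi : ∀ p ∈ B, p * p = p)
    (hBo : ∀ p ∈ B, ∀ r ∈ B, p ≠ r → p * r = 0)
    (hBs : (Z : Set (Matrix n n ℂ)) = (Submodule.span ℂ (B : Set (Matrix n n ℂ)) :
      Set (Matrix n n ℂ))) :
    B ⊆ A := by
  have hAZ : ∀ p ∈ A, p ∈ Z := by
    intro p hp
    have : p ∈ (Submodule.span ℂ (A : Set (Matrix n n ℂ)) : Set (Matrix n n ℂ)) :=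
      Submodule.subset_span (Finset.mem_coe.mpr hp)
    rw [← hAs] at this
    exact this
  have hBZ : ∀ p ∈ B, p ∈ Z := by
    intro p hp
    have : p ∈ (Submodule.span ℂ (B : Set (Matrix n n ℂ)) : Set (Matrix n n ℂ)) :=
      Submodule.subset_span (Finset.mem_coe.mpr hp)
    rw [← hBs] at this
    exact this
  intro q hqB
  have hqZ : q ∈ Z := hBZ q hqB
  have hq_spanA : q ∈ Submodule.span ℂ (A : Set (Matrix n n ℂ)) := by
    have : q ∈ (Z : Set (Matrix n n ℂ)) := hqZ
    rw [hAs] at this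
    exact this
  obtain ⟨c, hcsum, hcprop⟩ := coeff01 A hA0 hAi hAo q hq_spanA (hBi q hqB)
  have hex : ∃ p ∈ A, c p ≠ 0 := by
    by_contra h
    push_neg at h
    apply hB0 q hqB
    rw [← hcsum]
    exact Finset.sum_eq_zero fun p hp => by rw [h p hp, zero_smul]
  obtain ⟨p, hpA, hcp⟩ := hex
  have hcp1 : c p = 1 := ((hcprop p hpA).2).resolve_left hcp
  have hqp : q * p = p := by rw [(hcprop p hpA).1, hcp1, one_smul]
  have hp_spanB : p ∈ Submodule.span ℂ (B : Set (Matrix n n ℂ)) := by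
    have : p ∈ (Z : Set (Matrix n n ℂ)) := hAZ p hpA
    rw [hBs] at this
    exact this
  obtain ⟨dcf, hdsum, hdprop⟩ := coeff01 B hB0 hBi hBo p hp_spanB (hAi p hpA)
  have hpq : p * q = dcf q • q := (hdprop q hqB).1
  have hpq' : p * q = p := by
    rw [hcomm p (hAZ p hpA) q hqZ, hqp]
  have hpdq : p = dcf q • q := hpq'.symm.trans hpq
  have hdq1 : dcf q = 1 := by
    rcases (hdprop q hqB).2 with h | h
    · exfalso
      apply hA0 p hpA
      rw [hpdq, h, zero_smul]
    · exact h
  have : p = q := by rw [hpdq, hdq1, one_smul]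
  rwa [← this]

theorem atomic_projectors_exist_unique {n : Type} [Fintype n] [DecidableEq n]
    (Z : StarSubalgebra ℂ (Matrix n n ℂ))
    (hcomm : ∀ a ∈ Z, ∀ b ∈ Z, a * b = b * a) :
    ∃! P : Finset (Matrix n n ℂ),
      (∀ p ∈ P, p ≠ 0) ∧
      (∀ p ∈ P, pᴴ = p) ∧
      (∀ p ∈ P, p * p = p) ∧
      (∀ p ∈ P, ∀ q ∈ P, p ≠ q → p * q = 0) ∧
      (Z : Set (Matrix n n ℂ)) =
        (Submodule.span ℂ (P : Set (Matrix n n ℂ)) : Set (Matrix n n ℂ)) := by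
  classical
  have hSmem : ∀ x, x ∈ Subalgebra.toSubmodule Z.toSubalgebra ↔ x ∈ Z := fun x => by
    simp [Subalgebra.mem_toSubmodule, StarSubalgebra.mem_toSubalgebra]
  have hM1 : Submodule.map (LinearMap.mulLeft ℂ (1 : Matrix n n ℂ))
      (Subalgebra.toSubmodule Z.toSubalgebra) = Subalgebra.toSubmodule Z.toSubalgebra := by
    ext x
    rw [mem_M]
    constructor
    · rintro ⟨a, ha, rfl⟩
      rw [one_mul]
      exact (hSmem a).mpr ha
    · intro hx
      exact ⟨x, (hSmem x).mp hx, one_mul x⟩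
  obtain ⟨P, hP0, hPh, hPi, hPo, hPs⟩ := exists_partition Z hcomm
    (Module.finrank ℂ (Subalgebra.toSubmodule Z.toSubalgebra)) 1 (one_mem Z)
    Matrix.conjTranspose_one (one_mul 1) (le_of_eq (by rw [hM1]))
  rw [hM1] at hPs
  have hset : (Z : Set (Matrix n n ℂ)) =
      (Submodule.span ℂ (P : Set (Matrix n n ℂ)) : Set (Matrix n n ℂ)) := by
    rw [hPs, Subalgebra.coe_toSubmodule, StarSubalgebra.coe_toSubalgebra]
  refine ⟨P, ⟨hP0, hPh, hPi, hPo, hset⟩, ?_⟩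
  rintro Q ⟨hQ0, hQh, hQi, hQo, hQs⟩
  exact Finset.Subset.antisymm
    (unique_subset Z hcomm P Q hP0 hPi hPo hset hQ0 hQi hQo hQs)
    (unique_subset Z hcomm Q P hQ0 hQi hQo hQs hP0 hPi hPo hset)
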